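/- arXiv:1706.02998 — 2 statements merged into one kernel-verified Lean document; each statement's English description precedes it below -/
import Mathlib

section
/- The pseudospin expectation is an even function of the angle sequence: F(γ, β, θ) = F(−γ, −β, θ) for all γ, β ∈ ℝ^p and all θ ∈ ℝ. -/
open Matrix Complex Real

noncomputable section

def σx : Matrix (Fin 2) (Fin 2) ℂ := !![0, 1; 1, 0]

def σz : Matrix (Fin 2) (Fin 2) ℂ := !![1, 0; 0, -1]

/-- The Bloch axis `n(θ) = cos θ · σz + sin θ · σx`. -/
def nvec (θ : ℝ) : Matrix (Fin 2) (Fin 2) ℂ :=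
  (Real.cos θ : ℂ) • σz + (Real.sin θ : ℂ) • σx

/-- `U_B(β) = exp(−2iβ·σz)`. -/
def UB (β : ℝ) : Matrix (Fin 2) (Fin 2) ℂ :=
  NormedSpace.exp ((-2 * β * Complex.I) • σz)

/-- `U_C(γ,θ) = exp(−2iγ·n(θ))`. -/
def UC (γ θ : ℝ) : Matrix (Fin 2) (Fin 2) ℂ :=
  NormedSpace.exp ((-2 * γ * Complex.I) • nvec θ)

/-- The level-`p` QAOA circuit `U(γ,β,θ) = U_B(β_p)·U_C(γ_p,θ)·⋯·U_B(β_1)·U_C(γ_1,θ)`. -/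
def Uqaoa (p : ℕ) (γ β : Fin p → ℝ) (θ : ℝ) : Matrix (Fin 2) (Fin 2) ℂ :=
  ((List.ofFn fun i : Fin p => UB (β i) * UC (γ i) θ).reverse).prod

/-- The pseudospin expectation `F(γ,β,θ) = Re tr[n(θ)·U·σz·U†]`. -/
def Fps (p : ℕ) (γ β : Fin p → ℝ) (θ : ℝ) : ℝ :=
  (Matrix.trace (nvec θ * Uqaoa p γ β θ * σz * (Uqaoa p γ β θ)ᴴ)).re

end
noncomputable section

namespace PseudospinAux

local notation "𝓒" => starRingEnd ℂ

lemma map_eq_CT_T (M : Matrix (Fin 2) (Fin 2) ℂ) : M.map 𝓒 = (Mᴴ)ᵀ := by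
  ext i j; simp [Matrix.conjTranspose_apply, Matrix.map_apply]

lemma sigz_CT : σzᴴ = σz := by
  ext i j; fin_cases i <;> fin_cases j <;>
    simp [σz, Matrix.conjTranspose_apply]

lemma sigz_T : σzᵀ = σz := by
  ext i j; fin_cases i <;> fin_cases j <;> simp [σz]

lemma nvec_CT (θ : ℝ) : (nvec θ)ᴴ = nvec θ := by
  ext i j; fin_cases i <;> fin_cases j <;>
    simp [nvec, σx, σz, Matrix.conjTranspose_apply, -Complex.ofReal_cos, -Complex.ofReal_sin, ← Complex.ofReal_neg]

lemma nvec_T (θ : ℝ) : (nvec θ)ᵀ = nvec θ := by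
  ext i j; fin_cases i <;> fin_cases j <;> simp [nvec, σx, σz]

lemma UC_map (γ θ : ℝ) : (UC γ θ).map 𝓒 = UC (-γ) θ := by
  rw [map_eq_CT_T, UC, UC, ← Matrix.exp_conjTranspose, ← Matrix.exp_transpose]
  congr 1
  rw [Matrix.conjTranspose_smul, nvec_CT, Matrix.transpose_smul, nvec_T]
  congr 1
  simp [_root_.map_mul, Complex.conj_I]

lemma UB_map (β : ℝ) : (UB β).map 𝓒 = UB (-β) := by
  rw [map_eq_CT_T, UB, UB, ← Matrix.exp_conjTranspose, ← Matrix.exp_transpose]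
  congr 1
  rw [Matrix.conjTranspose_smul, sigz_CT, Matrix.transpose_smul, sigz_T]
  congr 1
  simp [_root_.map_mul, Complex.conj_I]

lemma nvec_map (θ : ℝ) : (nvec θ).map 𝓒 = nvec θ := by
  rw [map_eq_CT_T, nvec_CT, nvec_T]

lemma sigz_map : σz.map 𝓒 = σz := by
  rw [map_eq_CT_T, sigz_CT, sigz_T]

lemma Uqaoa_map (p : ℕ) (γ β : Fin p → ℝ) (θ : ℝ) :
    (Uqaoa p γ β θ).map 𝓒 = Uqaoa p (fun i => -γ i) (fun i => -β i) θ := by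
  have h : (Uqaoa p γ β θ).map 𝓒
      = (starRingEnd ℂ).mapMatrix (Uqaoa p γ β θ) := rfl
  rw [h, Uqaoa, map_list_prod, List.map_reverse, List.map_ofFn, Uqaoa]
  congr 2
  apply congrArg
  funext i
  show (starRingEnd ℂ).mapMatrix (UB (β i) * UC (γ i) θ) = _
  rw [_root_.map_mul]
  show (UB (β i)).map 𝓒 * (UC (γ i) θ).map 𝓒 = _
  rw [UB_map, UC_map]

lemma map_CT (M : Matrix (Fin 2) (Fin 2) ℂ) : (M.map 𝓒)ᴴ = (Mᴴ).map 𝓒 := by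
  ext i j; simp [Matrix.conjTranspose_apply, Matrix.map_apply]

lemma trace_map (M : Matrix (Fin 2) (Fin 2) ℂ) :
    Matrix.trace (M.map 𝓒) = 𝓒 (Matrix.trace M) := by
  simp [Matrix.trace, Matrix.diag, map_sum, Matrix.map_apply]

end PseudospinAux

open PseudospinAux in
/-- The pseudospin expectation is an even function of the angle sequence. -/
theorem pseudospin_even_in_angles
    (p : ℕ) (hp : 1 ≤ p) (γ β : Fin p → ℝ) (θ : ℝ) :
    Fps p γ β θ = Fps p (fun i => -γ i) (fun i => -β i) θ := by
  unfold Fps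
  rw [← Uqaoa_map p γ β θ]
  set U := Uqaoa p γ β θ
  have key : nvec θ * U.map (starRingEnd ℂ) * σz * (U.map (starRingEnd ℂ))ᴴ
      = (nvec θ * U * σz * Uᴴ).map (starRingEnd ℂ) := by
    rw [map_CT, ← nvec_map θ, ← sigz_map]
    simp only [← Matrix.map_mul]
    rw [nvec_map, sigz_map]
  rw [key, trace_map]
  simp
end
end

section
/- With R(θ) = cos(θ/2)·σz + sin(θ/2)·σx, for all γ, β ∈ ℝ^p and all θ ∈ ℝ, conjugation by R reverses and exchanges the QAOA angle sequence: R(θ)·U(γ, β, θ)·R(θ) = (U(−β′, −γ′, θ))†, where γ′ = (γ_p, …, γ_1) and β′ = (β_p, …, β_1). -/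
open Matrix Complex Real

noncomputable section

/-- The rotation `R(θ) = cos(θ/2)·σz + sin(θ/2)·σx`. -/
def Rrot (θ : ℝ) : Matrix (Fin 2) (Fin 2) ℂ :=
  (Real.cos (θ / 2) : ℂ) • σz + (Real.sin (θ / 2) : ℂ) • σx

lemma Rrot_eq (θ : ℝ) : Rrot θ =
    !![(Real.cos (θ/2) : ℂ), (Real.sin (θ/2) : ℂ);
       (Real.sin (θ/2) : ℂ), -(Real.cos (θ/2) : ℂ)] := by
  unfold Rrot σz σx
  ext i j
  fin_cases i <;> fin_cases j <;> simp

lemma nvec_eq (θ : ℝ) : nvec θ =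
    !![(Real.cos θ : ℂ), (Real.sin θ : ℂ);
       (Real.sin θ : ℂ), -(Real.cos θ : ℂ)] := by
  unfold nvec σz σx
  ext i j
  fin_cases i <;> fin_cases j <;> simp

lemma Rsq (θ : ℝ) : Rrot θ * Rrot θ = 1 := by
  have h : (Real.cos (θ/2) : ℂ) * (Real.cos (θ/2) : ℂ)
      + (Real.sin (θ/2) : ℂ) * (Real.sin (θ/2) : ℂ) = 1 := by
    norm_cast
    nlinarith [Real.sin_sq_add_cos_sq (θ/2)]
  rw [Rrot_eq]
  ext i j
  fin_cases i <;> fin_cases j <;>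
    simp [Matrix.mul_apply, Fin.sum_univ_two, Matrix.one_apply,
      -Complex.ofReal_cos, -Complex.ofReal_sin] <;>
    first | ring1 | linear_combination h

lemma RσzR (θ : ℝ) : Rrot θ * σz * Rrot θ = nvec θ := by
  have hc : (Real.cos θ : ℂ) = (Real.cos (θ/2) : ℂ) * (Real.cos (θ/2) : ℂ)
      - (Real.sin (θ/2) : ℂ) * (Real.sin (θ/2) : ℂ) := by
    norm_cast
    have h1 := Real.cos_two_mul (θ/2)
    have h2 : 2 * (θ/2) = θ := by ring
    rw [h2] at h1
    nlinarith [h1, Real.sin_sq_add_cos_sq (θ/2)]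
  have hs : (Real.sin θ : ℂ) = 2 * (Real.sin (θ/2) : ℂ) * (Real.cos (θ/2) : ℂ) := by
    norm_cast
    have h1 := Real.sin_two_mul (θ/2)
    have h2 : 2 * (θ/2) = θ := by ring
    rw [h2] at h1
    linarith [h1]
  rw [Rrot_eq, nvec_eq]
  unfold σz
  ext i j
  fin_cases i <;> fin_cases j <;>
    simp [Matrix.mul_apply, Fin.sum_univ_two,
      -Complex.ofReal_cos, -Complex.ofReal_sin] <;>
    first
      | ring1
      | linear_combination hc
      | linear_combination -hc
      | linear_combination hs
      | linear_combination -hs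

lemma RnR (θ : ℝ) : Rrot θ * nvec θ * Rrot θ = σz := by
  have h := RσzR θ
  calc Rrot θ * nvec θ * Rrot θ
      = Rrot θ * (Rrot θ * σz * Rrot θ) * Rrot θ := by rw [h]
    _ = (Rrot θ * Rrot θ) * σz * (Rrot θ * Rrot θ) := by noncomm_ring
    _ = σz := by rw [Rsq]; simp

lemma R_inv (θ : ℝ) : (Rrot θ)⁻¹ = Rrot θ := Matrix.inv_eq_right_inv (Rsq θ)

lemma R_isUnit (θ : ℝ) : IsUnit (Rrot θ) := ⟨⟨Rrot θ, Rrot θ, Rsq θ, Rsq θ⟩, rfl⟩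

lemma R_UB (θ β : ℝ) : Rrot θ * UB β * Rrot θ = UC β θ := by
  have h := Matrix.exp_conj (Rrot θ) ((-2 * (β : ℂ) * Complex.I) • σz) (R_isUnit θ)
  rw [R_inv] at h
  unfold UB UC
  rw [← h]
  congr 1
  rw [Matrix.mul_smul, Matrix.smul_mul, RσzR]

lemma R_UC (θ γ : ℝ) : Rrot θ * UC γ θ * Rrot θ = UB γ := by
  have h := Matrix.exp_conj (Rrot θ) ((-2 * (γ : ℂ) * Complex.I) • nvec θ) (R_isUnit θ)
  rw [R_inv] at h
  unfold UB UC
  rw [← h]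
  congr 1
  rw [Matrix.mul_smul, Matrix.smul_mul, RnR]

lemma σz_herm : σzᴴ = σz := by
  unfold σz
  ext i j
  fin_cases i <;> fin_cases j <;> simp

lemma σx_herm : σxᴴ = σx := by
  unfold σx
  ext i j
  fin_cases i <;> fin_cases j <;> simp

lemma nvec_herm (θ : ℝ) : (nvec θ)ᴴ = nvec θ := by
  unfold nvec
  rw [conjTranspose_add, conjTranspose_smul, conjTranspose_smul, σz_herm, σx_herm]
  simp [Complex.conj_ofReal, -Complex.ofReal_cos, -Complex.ofReal_sin]

lemma UB_star (β : ℝ) : (UB β)ᴴ = UB (-β) := by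
  unfold UB
  rw [← Matrix.exp_conjTranspose, conjTranspose_smul, σz_herm]
  congr 1
  simp [Complex.ext_iff]

lemma UC_star (γ θ : ℝ) : (UC γ θ)ᴴ = UC (-γ) θ := by
  unfold UC
  rw [← Matrix.exp_conjTranspose, conjTranspose_smul, nvec_herm]
  congr 1
  simp [Complex.ext_iff]

lemma conj_list_prod (R : Matrix (Fin 2) (Fin 2) ℂ) (hR : R * R = 1) :
    ∀ l : List (Matrix (Fin 2) (Fin 2) ℂ),
      R * l.prod * R = (l.map (fun A => R * A * R)).prod
  | [] => by simp [hR]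
  | A :: l => by
    rw [List.map_cons, List.prod_cons, List.prod_cons, ← conj_list_prod R hR l]
    calc R * (A * l.prod) * R
        = R * A * (R * R) * l.prod * R := by rw [hR]; noncomm_ring
      _ = R * A * R * (R * l.prod * R) := by noncomm_ring

lemma ofFn_rev {α : Type*} {p : ℕ} (f : Fin p → α) :
    (List.ofFn f).reverse = List.ofFn (fun i => f (Fin.rev i)) := by
  apply List.ext_getElem
  · simp
  · intro i h1 h2
    simp only [List.getElem_reverse, List.getElem_ofFn, List.length_ofFn] at *
    congr 1
    ext
    simp [Fin.rev]
    omega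

/-- Conjugation by `R(θ)` reverses and exchanges the QAOA angle sequence:
`R·U(γ,β,θ)·R = (U(−β′,−γ′,θ))†`. -/
theorem conjugation_reverses_and_exchanges_angles
    (p : ℕ) (hp : 1 ≤ p) (γ β : Fin p → ℝ) (θ : ℝ) :
    Rrot θ * Uqaoa p γ β θ * Rrot θ =
      (Uqaoa p (fun i => -β (Fin.rev i)) (fun i => -γ (Fin.rev i)) θ)ᴴ := by
  unfold Uqaoa
  rw [conj_list_prod _ (Rsq θ), Matrix.conjTranspose_list_prod, List.map_reverse,
    List.map_reverse, List.reverse_reverse, List.map_ofFn, List.map_ofFn, ofFn_rev]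
  congr 1
  congr 1
  funext i
  simp only [Function.comp]
  rw [conjTranspose_mul, UB_star, UC_star, neg_neg, neg_neg]
  calc Rrot θ * (UB (β (Fin.rev i)) * UC (γ (Fin.rev i)) θ) * Rrot θ
      = (Rrot θ * UB (β (Fin.rev i)) * Rrot θ) * (Rrot θ * UC (γ (Fin.rev i)) θ * Rrot θ) := by
        rw [show ∀ A B : Matrix (Fin 2) (Fin 2) ℂ,
          (Rrot θ * A * Rrot θ) * (Rrot θ * B * Rrot θ)
            = Rrot θ * A * (Rrot θ * Rrot θ) * B * Rrot θ from fun A B => by noncomm_ring,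
          Rsq]
        noncomm_ring
    _ = UC (β (Fin.rev i)) θ * UB (γ (Fin.rev i)) := by rw [R_UB, R_UC]
end
end
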